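/- arXiv:2412.05897 — 2 statements merged into one kernel-verified Lean document; each statement's English description precedes it below -/
import Mathlib

section
/- Let V be a real inner product space, let n be a positive integer, and let f₁, …, f_n, f, and f_t be unit vectors of V such that (1/n) Σ_{j=1}^n f_j = f. Then the empirical variance of the inner products with f_t is bounded as follows: (1/n) Σ_{k=1}^n (⟨f_k, f_t⟩ − (1/n) Σ_{j=1}^n ⟨f_j, f_t⟩)² ≤ 2 − (2/n) Σ_{k=1}^n ⟨f_k, f⟩. -/
open Finset

/-- Upper bound of the paper's Eq. (13): for unit vectors `f 1, …, f n`, `f`, `f_t` in a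
real inner product space with `(1/n) ∑ j f j = f`, the empirical variance of the inner
products `⟪f k, f_t⟫` is at most `2 - (2/n) ∑ k ⟪f k, f⟫`. -/
theorem uncertainty_upper_bound_without_teacher
    {V : Type*} [NormedAddCommGroup V] [InnerProductSpace ℝ V]
    (n : ℕ) (hn : 0 < n) (fs : Fin n → V) (f ft : V)
    (hfs : ∀ k, ‖fs k‖ = 1) (hf : ‖f‖ = 1) (hft : ‖ft‖ = 1)
    (hmean : (1 / n : ℝ) • ∑ j, fs j = f) :
    (1 / n : ℝ) * ∑ k, ((inner ℝ (fs k) ft : ℝ) - (1 / n : ℝ) * ∑ j, (inner ℝ (fs j) ft : ℝ)) ^ 2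
      ≤ 2 - (2 / n : ℝ) * ∑ k, (inner ℝ (fs k) f : ℝ) := by
  have hnR : (0 : ℝ) < n := by exact_mod_cast hn
  have hmeanInner : (1 / n : ℝ) * ∑ j, (inner ℝ (fs j) ft : ℝ) = (inner ℝ f ft : ℝ) := by
    rw [← hmean, real_inner_smul_left, sum_inner]
  have hterm : ∀ k, ((inner ℝ (fs k) ft : ℝ) - (1 / n : ℝ) * ∑ j, (inner ℝ (fs j) ft : ℝ)) ^ 2
      ≤ 2 - 2 * (inner ℝ (fs k) f : ℝ) := by
    intro k
    rw [hmeanInner, ← inner_sub_left]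
    have hcs := abs_real_inner_le_norm (fs k - f) ft
    have h1 : |(inner ℝ (fs k - f) ft : ℝ)| ≤ ‖fs k - f‖ := by
      simpa [hft] using hcs
    have h2 : ((inner ℝ (fs k - f) ft : ℝ)) ^ 2 ≤ ‖fs k - f‖ ^ 2 := by
      calc ((inner ℝ (fs k - f) ft : ℝ)) ^ 2 = |(inner ℝ (fs k - f) ft : ℝ)| ^ 2 := (sq_abs _).symm
        _ ≤ ‖fs k - f‖ ^ 2 := by
            exact pow_le_pow_left₀ (abs_nonneg _) h1 2
    have h3 : ‖fs k - f‖ ^ 2 = 2 - 2 * (inner ℝ (fs k) f : ℝ) := by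
      rw [← real_inner_self_eq_norm_sq, inner_sub_sub_self,
        real_inner_self_eq_norm_sq, real_inner_self_eq_norm_sq, hfs k, hf,
        real_inner_comm f (fs k)]
      ring
    linarith
  have hsum : ∑ k, ((inner ℝ (fs k) ft : ℝ) - (1 / n : ℝ) * ∑ j, (inner ℝ (fs j) ft : ℝ)) ^ 2
      ≤ ∑ k : Fin n, (2 - 2 * (inner ℝ (fs k) f : ℝ)) := sum_le_sum fun k _ => hterm k
  have hsum2 : ∑ k : Fin n, (2 - 2 * (inner ℝ (fs k) f : ℝ))
      = 2 * n - 2 * ∑ k, (inner ℝ (fs k) f : ℝ) := by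
    rw [sum_sub_distrib, ← mul_sum]
    simp [mul_comm]
  have hmul := mul_le_mul_of_nonneg_left hsum (by positivity : (0:ℝ) ≤ 1 / n)
  calc (1 / n : ℝ) * ∑ k, ((inner ℝ (fs k) ft : ℝ) - (1 / n : ℝ) * ∑ j, (inner ℝ (fs j) ft : ℝ)) ^ 2
      ≤ (1 / n : ℝ) * (2 * n - 2 * ∑ k, (inner ℝ (fs k) f : ℝ)) := by rw [← hsum2]; exact hmul
    _ = 2 - (2 / n : ℝ) * ∑ k, (inner ℝ (fs k) f : ℝ) := by field_simp
end

section
/- (PAC-Bayes bound, McAllester) Let (Θ, 𝒜) and (Z, ℬ) be measurable spaces, let ℓ : Θ × Z → [0, 1] be jointly measurable, let D be a probability measure on Z (the data distribution), let P be a probability measure on Θ (the prior), let N ≥ 2 be an integer, and let δ ∈ (0, 1). Then, with probability at least 1 − δ over the draw of an i.i.d. sample (z₁, …, z_N) ∼ D^N, the following holds simultaneously for every probability measure Q on Θ (the posterior): E_{θ∼Q}[ E_{z∼D}[ℓ(θ, z)] ] ≤ E_{θ∼Q}[ (1/N) Σ_{i=1}^N ℓ(θ, z_i) ] + √( (KL(Q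 ‖ P) + ln(N/δ)) / (2(N − 1)) ). -/
open MeasureTheory ProbabilityTheory
open scoped Classical

/-- The Kullback–Leibler divergence `KL(Q ‖ P)`: equal to `∫ log (dQ/dP) dQ` when `Q ≪ P`
and the log-likelihood ratio is `Q`-integrable, and `+∞` otherwise. -/
noncomputable def klDivergence {α : Type*} [MeasurableSpace α] (Q P : Measure α) : EReal :=
  if Q ≪ P ∧ Integrable (llr Q P) Q then ((∫ x, llr Q P x ∂Q : ℝ) : EReal) else ⊤

section Aux
open Real Set

/-- Core analytic inequality for Hoeffding's lemma. -/
lemma hoeffding_core {p : ℝ} (hp : p ∈ Set.Icc (0:ℝ) 1) (t : ℝ) :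
    Real.log (1 - p + p * Real.exp t) ≤ t * p + t ^ 2 / 8 := by
  obtain ⟨hp0, hp1⟩ := hp
  set A : ℝ → ℝ := fun t => 1 - p + p * Real.exp t with hA_def
  have hA : ∀ t, 0 < A t := by
    intro t
    rcases eq_or_lt_of_le hp0 with h | h
    · simp [hA_def, ← h]
    · have h1 : 0 < p * Real.exp t := mul_pos h (Real.exp_pos t)
      have : (0:ℝ) ≤ 1 - p := by linarith
      simp only [hA_def]; linarith
  have hA' : ∀ t, HasDerivAt A (p * Real.exp t) t := by
    intro t
    exact ((Real.hasDerivAt_exp t).const_mul p).const_add (1 - p)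
  set F : ℝ → ℝ := fun t => Real.log (A t) - (t * p + t ^ 2 / 8) with hF_def
  set G : ℝ → ℝ := fun t => p * Real.exp t / A t - (p + t / 4) with hG_def
  have hF' : ∀ t, HasDerivAt F (G t) t := by
    intro t
    have h1 : HasDerivAt (fun t => Real.log (A t)) (p * Real.exp t / A t) t :=
      (hA' t).log (hA t).ne'
    have h2 : HasDerivAt (fun t : ℝ => t * p + t ^ 2 / 8) (p + t / 4) t := by
      have := (hasDerivAt_mul_const (x := t) p).add ((hasDerivAt_pow 2 t).div_const 8)
      refine this.congr_deriv ?_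
      ring
    exact h1.sub h2
  have hG' : ∀ t, HasDerivAt G
      ((p * Real.exp t * A t - p * Real.exp t * (p * Real.exp t)) / (A t) ^ 2 - 1 / 4) t := by
    intro t
    have h1 : HasDerivAt (fun t => p * Real.exp t / A t)
        ((p * Real.exp t * A t - p * Real.exp t * (p * Real.exp t)) / (A t) ^ 2) t :=
      (((Real.hasDerivAt_exp t).const_mul p)).div (hA' t) (hA t).ne'
    have h2 : HasDerivAt (fun t : ℝ => p + t / 4) (1 / 4) t := by
      simpa using ((hasDerivAt_id t).div_const 4).const_add p
    exact h1.sub h2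
  have hG'_nonpos : ∀ t, (p * Real.exp t * A t - p * Real.exp t * (p * Real.exp t)) / (A t) ^ 2
      - 1 / 4 ≤ 0 := by
    intro t
    have ha : 0 ≤ p * Real.exp t := mul_nonneg hp0 (Real.exp_pos t).le
    have hb : (0:ℝ) ≤ 1 - p := by linarith
    have hApos := hA t
    have key : (p * Real.exp t * A t - p * Real.exp t * (p * Real.exp t)) / (A t) ^ 2 ≤ 1 / 4 := by
      rw [div_le_iff₀ (by positivity)]
      have hAt : A t = 1 - p + p * Real.exp t := rfl
      nlinarith [sq_nonneg (p * Real.exp t - (1 - p))]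
    linarith
  have hG_anti : Antitone G := by
    apply antitone_of_deriv_nonpos
    · intro t; exact (hG' t).differentiableAt
    · intro t; rw [(hG' t).deriv]; exact hG'_nonpos t
  have hG0 : G 0 = 0 := by
    simp [hG_def, hA_def]
  have hF0 : F 0 = 0 := by
    simp [hF_def, hA_def]
  have hFt : ∀ t, F t ≤ 0 := by
    intro t
    rcases le_total 0 t with h | h
    · have hanti : AntitoneOn F (Set.Ici 0) := by
        apply antitoneOn_of_deriv_nonpos (convex_Ici 0)
        · exact fun x _ => ((hF' x).differentiableAt).continuousAt.continuousWithinAt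
        · exact fun x _ => ((hF' x).differentiableAt).differentiableWithinAt
        · intro x hx
          rw [(hF' x).deriv]
          rw [interior_Ici] at hx
          calc G x ≤ G 0 := hG_anti (le_of_lt hx)
            _ = 0 := hG0
      calc F t ≤ F 0 := hanti (Set.self_mem_Ici) h h
        _ = 0 := hF0
    · have hmono : MonotoneOn F (Set.Iic 0) := by
        apply monotoneOn_of_deriv_nonneg (convex_Iic 0)
        · exact fun x _ => ((hF' x).differentiableAt).continuousAt.continuousWithinAt
        · exact fun x _ => ((hF' x).differentiableAt).differentiableWithinAt
        · intro x hx
          rw [(hF' x).deriv]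
          rw [interior_Iic] at hx
          calc (0:ℝ) = G 0 := hG0.symm
            _ ≤ G x := hG_anti (le_of_lt hx)
      calc F t ≤ F 0 := hmono h (Set.self_mem_Iic) h
        _ = 0 := hF0
  have := hFt t
  simp only [hF_def] at this
  linarith

lemma integrable_of_bdd {α : Type*} [MeasurableSpace α] {μ : Measure α} [IsFiniteMeasure μ]
    {f : α → ℝ} {C : ℝ} (hm : AEStronglyMeasurable f μ) (hb : ∀ a, |f a| ≤ C) :
    Integrable f μ :=
  (integrable_const C).mono' hm (Filter.Eventually.of_forall hb)

lemma exp_convex_bound {x : ℝ} (hx : x ∈ Set.Icc (0:ℝ) 1) (s : ℝ) :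
    Real.exp (s * x) ≤ 1 - x + x * Real.exp s := by
  have h := convexOn_exp.2 (Set.mem_univ (0:ℝ)) (Set.mem_univ s)
    (by linarith [hx.2] : (0:ℝ) ≤ 1 - x) hx.1 (by ring)
  simp only [smul_eq_mul, mul_zero, zero_add, Real.exp_zero, mul_one] at h
  calc Real.exp (s * x) = Real.exp (x * s) := by rw [mul_comm]
    _ ≤ (1 - x) + x * Real.exp s := by linarith [h]

lemma aux_pos {p : ℝ} (hp0 : 0 ≤ p) (hp1 : p ≤ 1) (t : ℝ) : 0 < 1 - p + p * Real.exp t := by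
  rcases eq_or_lt_of_le hp0 with h | h
  · simp [← h]
  · nlinarith [Real.exp_pos t, mul_pos h (Real.exp_pos t)]

lemma hoeffding_mgf {Ω : Type*} [MeasurableSpace Ω] (μ : Measure Ω) [IsProbabilityMeasure μ]
    {X : Ω → ℝ} (hXm : Measurable X) (hX : ∀ ω, X ω ∈ Set.Icc (0:ℝ) 1) (t : ℝ) :
    ∫ ω, Real.exp (t * ((∫ x, X x ∂μ) - X ω)) ∂μ ≤ Real.exp (t ^ 2 / 8) := by
  set m := ∫ x, X x ∂μ with hm_def
  have hXint : Integrable X μ := integrable_of_bdd (C := 1) hXm.aestronglyMeasurable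
    (fun ω => by rw [abs_le]; constructor <;> linarith [(hX ω).1, (hX ω).2])
  have hm0 : 0 ≤ m := integral_nonneg fun ω => (hX ω).1
  have hm1 : m ≤ 1 := by
    calc m ≤ ∫ _, (1:ℝ) ∂μ := integral_mono hXint (integrable_const 1) fun ω => (hX ω).2
      _ = 1 := by simp
  have hpt : ∀ ω, Real.exp (t * (m - X ω)) = Real.exp (t * m) * Real.exp (-t * X ω) := by
    intro ω; rw [← Real.exp_add]; ring_nf
  have hint1 : Integrable (fun ω => Real.exp (-t * X ω)) μ := by
    apply integrable_of_bdd ((hXm.const_mul (-t)).exp).aestronglyMeasurable (C := Real.exp |t|)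
    intro ω
    rw [abs_of_pos (Real.exp_pos _)]
    apply Real.exp_le_exp.mpr
    calc -t * X ω ≤ |(-t) * X ω| := le_abs_self _
      _ = |t| * |X ω| := by rw [abs_mul, abs_neg]
      _ ≤ |t| * 1 := by
          apply mul_le_mul_of_nonneg_left _ (abs_nonneg t)
          rw [abs_le]; constructor <;> linarith [(hX ω).1, (hX ω).2]
      _ = |t| := mul_one _
  have hint2 : Integrable (fun ω => 1 - X ω + X ω * Real.exp (-t)) μ :=
    ((integrable_const 1).sub hXint).add (hXint.mul_const _)
  have hmono : ∫ ω, Real.exp (-t * X ω) ∂μ ≤ 1 - m + m * Real.exp (-t) := by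
    calc ∫ ω, Real.exp (-t * X ω) ∂μ ≤ ∫ ω, (1 - X ω + X ω * Real.exp (-t)) ∂μ :=
        integral_mono hint1 hint2 (fun ω => exp_convex_bound (hX ω) (-t))
      _ = 1 - m + m * Real.exp (-t) := by
        have hsubint : Integrable (fun ω => 1 - X ω) μ := (integrable_const 1).sub hXint
        rw [integral_add hsubint (hXint.mul_const _),
          integral_sub (integrable_const 1) hXint, integral_mul_const]
        simp [hm_def]
  have hApos : 0 < 1 - m + m * Real.exp (-t) := aux_pos hm0 hm1 (-t)
  have hlog := hoeffding_core ⟨hm0, hm1⟩ (-t)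
  have hle : 1 - m + m * Real.exp (-t) ≤ Real.exp (-t * m + t ^ 2 / 8) := by
    rw [← Real.log_le_iff_le_exp hApos]
    calc Real.log (1 - m + m * Real.exp (-t)) ≤ (-t) * m + (-t) ^ 2 / 8 := hlog
      _ = -t * m + t ^ 2 / 8 := by ring
  calc ∫ ω, Real.exp (t * (m - X ω)) ∂μ
      = Real.exp (t * m) * ∫ ω, Real.exp (-t * X ω) ∂μ := by
        simp_rw [hpt]; rw [integral_const_mul]
    _ ≤ Real.exp (t * m) * (1 - m + m * Real.exp (-t)) :=
        mul_le_mul_of_nonneg_left hmono (Real.exp_pos _).le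
    _ ≤ Real.exp (t * m) * Real.exp (-t * m + t ^ 2 / 8) :=
        mul_le_mul_of_nonneg_left hle (Real.exp_pos _).le
    _ = Real.exp (t ^ 2 / 8) := by rw [← Real.exp_add]; ring_nf

section Sample

variable {Ω : Type*} [MeasureSpace Ω] [IsProbabilityMeasure (volume : Measure Ω)]

lemma pi_prob (N : ℕ) : IsProbabilityMeasure (volume : Measure (Fin N → Ω)) := by
  rw [MeasureTheory.volume_pi]
  infer_instance

lemma mean_mgf {X : Ω → ℝ} (hXm : Measurable X) (hX : ∀ ω, X ω ∈ Set.Icc (0:ℝ) 1)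
    {N : ℕ} (hN : 0 < N) (t : ℝ) :
    ∫ z : Fin N → Ω, Real.exp (t * ((∫ x, X x) - (N:ℝ)⁻¹ * ∑ i, X (z i)))
      ≤ Real.exp (t ^ 2 / (8 * N)) := by
  set m := ∫ x, X x with hm_def
  have hNne : (N:ℝ) ≠ 0 := Nat.cast_ne_zero.mpr hN.ne'
  have key : ∀ z : Fin N → Ω, Real.exp (t * (m - (N:ℝ)⁻¹ * ∑ i, X (z i)))
      = ∏ i : Fin N, Real.exp ((t / N) * (m - X (z i))) := by
    intro z
    rw [← Real.exp_sum]
    congr 1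
    have : ∑ i : Fin N, (t / N) * (m - X (z i))
        = (t / N) * ((N : ℝ) * m - ∑ i, X (z i)) := by
      rw [← Finset.mul_sum, Finset.sum_sub_distrib, Finset.sum_const, Finset.card_univ,
        Fintype.card_fin, nsmul_eq_mul]
    rw [this]
    calc t * (m - (↑N)⁻¹ * ∑ i, X (z i))
        = t * ((↑N)⁻¹ * (↑N * m) - (↑N)⁻¹ * ∑ i, X (z i)) := by
          rw [← mul_assoc, inv_mul_cancel₀ hNne, one_mul]
      _ = t / ↑N * (↑N * m - ∑ i, X (z i)) := by
          rw [div_eq_mul_inv]; ring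
  simp_rw [key]
  rw [show (∫ z : Fin N → Ω, ∏ i, Real.exp ((t / N) * (m - X (z i))))
      = ∫ z : Fin N → Ω, ∏ i, (fun x => Real.exp ((t / N) * (m - X x))) (z i) from rfl,
    MeasureTheory.volume_pi, integral_fintype_prod_eq_pow (fun x => Real.exp ((t / N) * (m - X x)))]
  have h1 : ∫ x, Real.exp ((t / N) * (m - X x)) ≤ Real.exp ((t / N) ^ 2 / 8) :=
    hoeffding_mgf volume hXm hX (t / N)
  calc (∫ x, Real.exp ((t / N) * (m - X x))) ^ (Fintype.card (Fin N))
      ≤ (Real.exp ((t / N) ^ 2 / 8)) ^ N := by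
        rw [Fintype.card_fin]
        exact pow_le_pow_left₀ (integral_nonneg fun x => (Real.exp_pos _).le) h1 N
    _ = Real.exp (t ^ 2 / (8 * N)) := by
        rw [← Real.exp_nat_mul]
        congr 1
        field_simp

lemma avg_mem {X : Ω → ℝ} (hX : ∀ ω, X ω ∈ Set.Icc (0:ℝ) 1) {N : ℕ} (hN : 0 < N)
    (z : Fin N → Ω) : (N:ℝ)⁻¹ * ∑ i, X (z i) ∈ Set.Icc (0:ℝ) 1 := by
  have hNpos : (0:ℝ) < N := Nat.cast_pos.mpr hN
  constructor
  · exact mul_nonneg (by positivity) (Finset.sum_nonneg fun i _ => (hX (z i)).1)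
  · have hsum : ∑ i : Fin N, X (z i) ≤ (N:ℝ) := by
      calc ∑ i : Fin N, X (z i) ≤ ∑ _i : Fin N, (1:ℝ) :=
          Finset.sum_le_sum fun i _ => (hX (z i)).2
        _ = N := by simp
    rw [inv_mul_le_iff₀ hNpos, mul_one]
    exact hsum

lemma sum_measurable {X : Ω → ℝ} (hXm : Measurable X) (N : ℕ) :
    Measurable fun z : Fin N → Ω => (N:ℝ)⁻¹ * ∑ i, X (z i) :=
  (Finset.measurable_sum _ fun i _ => hXm.comp (measurable_pi_apply i)).const_mul _

lemma chernoff {X : Ω → ℝ} (hXm : Measurable X) (hX : ∀ ω, X ω ∈ Set.Icc (0:ℝ) 1)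
    {N : ℕ} (hN : 0 < N) {ε : ℝ} (hε : 0 < ε) :
    volume {z : Fin N → Ω | ε ≤ (∫ x, X x) - (N:ℝ)⁻¹ * ∑ i, X (z i)}
      ≤ ENNReal.ofReal (Real.exp (-(2 * N * ε ^ 2))) := by
  haveI := pi_prob (Ω := Ω) N
  set m := ∫ x, X x with hm_def
  set Δ : (Fin N → Ω) → ℝ := fun z => m - (N:ℝ)⁻¹ * ∑ i, X (z i) with hΔ_def
  have hΔm : Measurable Δ := measurable_const.sub (sum_measurable hXm N)
  set t := 4 * (N:ℝ) * ε with ht_def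
  have htpos : 0 < t := by positivity
  have hmgf : ∫ z : Fin N → Ω, Real.exp (t * Δ z) ≤ Real.exp (t ^ 2 / (8 * N)) :=
    mean_mgf hXm hX hN t
  have hΔbd : ∀ z, |Δ z| ≤ 1 := by
    intro z
    have h1 := avg_mem hX hN z
    have hm0 : 0 ≤ m := integral_nonneg fun ω => (hX ω).1
    have hm1 : m ≤ 1 := by
      have hXint : Integrable X volume := integrable_of_bdd hXm.aestronglyMeasurable
        (C := 1) (fun ω => by rw [abs_le]; constructor <;> linarith [(hX ω).1, (hX ω).2])
      calc m ≤ ∫ _, (1:ℝ) := integral_mono hXint (integrable_const 1) fun ω => (hX ω).2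
        _ = 1 := by simp
    rw [abs_le]
    constructor <;> simp only [hΔ_def] <;> [linarith [h1.2]; linarith [h1.1]]
  have hintexp : Integrable (fun z => Real.exp (t * Δ z)) volume := by
    apply integrable_of_bdd ((hΔm.const_mul t).exp).aestronglyMeasurable (C := Real.exp |t|)
    intro z
    rw [abs_of_pos (Real.exp_pos _)]
    apply Real.exp_le_exp.mpr
    calc t * Δ z ≤ |t * Δ z| := le_abs_self _
      _ = |t| * |Δ z| := abs_mul _ _
      _ ≤ |t| * 1 := mul_le_mul_of_nonneg_left (hΔbd z) (abs_nonneg t)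
      _ = |t| := mul_one _
  have hsub : {z : Fin N → Ω | ε ≤ Δ z} ⊆ {z | Real.exp (t * ε) ≤ Real.exp (t * Δ z)} := by
    intro z hz
    simp only [Set.mem_setOf_eq] at *
    exact Real.exp_le_exp.mpr (mul_le_mul_of_nonneg_left hz htpos.le)
  have hmark := mul_meas_ge_le_integral_of_nonneg
    (Filter.Eventually.of_forall fun z => (Real.exp_pos (t * Δ z)).le) hintexp (Real.exp (t * ε))
  have hmono : (volume {z : Fin N → Ω | ε ≤ Δ z}).toReal
      ≤ (volume {z : Fin N → Ω | Real.exp (t * ε) ≤ Real.exp (t * Δ z)}).toReal :=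
    ENNReal.toReal_mono (measure_ne_top _ _) (measure_mono hsub)
  have h2 : Real.exp (t * ε) * (volume {z : Fin N → Ω | ε ≤ Δ z}).toReal
      ≤ Real.exp (t ^ 2 / (8 * N)) := by
    calc Real.exp (t * ε) * (volume {z : Fin N → Ω | ε ≤ Δ z}).toReal
        ≤ Real.exp (t * ε) *
          (volume {z : Fin N → Ω | Real.exp (t * ε) ≤ Real.exp (t * Δ z)}).toReal :=
          mul_le_mul_of_nonneg_left hmono (Real.exp_pos _).le
      _ ≤ ∫ z : Fin N → Ω, Real.exp (t * Δ z) := hmark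
      _ ≤ Real.exp (t ^ 2 / (8 * N)) := hmgf
  have h3 : (volume {z : Fin N → Ω | ε ≤ Δ z}).toReal ≤ Real.exp (-(2 * N * ε ^ 2)) := by
    have hNne : (N:ℝ) ≠ 0 := Nat.cast_ne_zero.mpr hN.ne'
    have hexp : t ^ 2 / (8 * N) - t * ε = -(2 * N * ε ^ 2) := by
      rw [ht_def]; field_simp; ring
    rw [← hexp, Real.exp_sub, le_div_iff₀ (Real.exp_pos _)]
    linarith [h2]
  rw [ENNReal.le_ofReal_iff_toReal_le (measure_ne_top _ _) (Real.exp_pos _).le]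
  exact h3

end Sample



section Sample2
variable {Ω : Type*} [MeasureSpace Ω] [IsProbabilityMeasure (volume : Measure Ω)]









/-- Key moment bound: `E[exp(2(N-1)·(Δ₊)²)] ≤ N`. -/
lemma moment_bound {X : Ω → ℝ} (hXm : Measurable X) (hX : ∀ ω, X ω ∈ Set.Icc (0:ℝ) 1)
    {N : ℕ} (hN : 2 ≤ N) :
    ∫ z : Fin N → Ω,
      Real.exp (2 * ((N:ℝ) - 1) * (max ((∫ x, X x) - (N:ℝ)⁻¹ * ∑ i, X (z i)) 0) ^ 2)
      ≤ (N : ℝ) := by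
  haveI := pi_prob (Ω := Ω) N
  have hN0 : 0 < N := by omega
  have hN1 : (1:ℝ) < (N:ℝ) := by exact_mod_cast hN.trans_lt' one_lt_two
  set m := ∫ x, X x with hm_def
  set s : ℝ := 2 * ((N:ℝ) - 1) with hs_def
  have hs : 0 < s := by simp only [hs_def]; linarith
  set Δ : (Fin N → Ω) → ℝ := fun z => m - (N:ℝ)⁻¹ * ∑ i, X (z i) with hΔ_def
  have hΔm : Measurable Δ := measurable_const.sub (sum_measurable hXm N)
  set f : (Fin N → Ω) → ℝ := fun z => Real.exp (s * (max (Δ z) 0) ^ 2) with hf_def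
  have hΔp_mem : ∀ z, max (Δ z) 0 ∈ Set.Icc (0:ℝ) 1 := by
    intro z
    refine ⟨le_max_right _ _, ?_⟩
    have hm1 : m ≤ 1 := by
      have hXint : Integrable X volume := integrable_of_bdd (C := 1) hXm.aestronglyMeasurable
        (fun ω => by rw [abs_le]; constructor <;> linarith [(hX ω).1, (hX ω).2])
      calc m ≤ ∫ _, (1:ℝ) := integral_mono hXint (integrable_const 1) fun ω => (hX ω).2
        _ = 1 := by simp
    have h1 := (avg_mem hX hN0 z).1
    have : Δ z ≤ 1 := by simp only [hΔ_def]; linarith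
    exact max_le this zero_le_one
  have hfm : Measurable f := (((hΔm.max measurable_const).pow_const 2).const_mul s).exp
  have hfb : ∀ z, f z ≤ Real.exp s := by
    intro z
    apply Real.exp_le_exp.mpr
    have h := hΔp_mem z
    calc s * (max (Δ z) 0) ^ 2 ≤ s * 1 :=
        mul_le_mul_of_nonneg_left (by nlinarith [h.1, h.2]) hs.le
      _ = s := mul_one s
  have hf1 : ∀ z, 1 ≤ f z := by
    intro z
    rw [show (1:ℝ) = Real.exp 0 from (Real.exp_zero).symm]
    apply Real.exp_le_exp.mpr
    positivity
  have hf_int : Integrable f volume := integrable_of_bdd (C := Real.exp s)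
    hfm.aestronglyMeasurable
    (fun z => by rw [abs_of_pos (Real.exp_pos _)]; exact hfb z)
  -- layer cake
  rw [hf_int.integral_eq_integral_meas_le
    (Filter.Eventually.of_forall fun z => (Real.exp_pos _).le)]
  -- the dominating function
  set p : ℝ := (N:ℝ) / ((N:ℝ) - 1) with hp_def
  have hp1 : 1 < p := by
    rw [hp_def, lt_div_iff₀ (by linarith)]
    linarith
  set h : ℝ → ℝ := fun u => if u ≤ 1 then 1 else u ^ (-p) with hh_def
  have hNm1 : (N:ℝ) - 1 ≠ 0 := by linarith
  have hIoc : IntegrableOn h (Ioc (0:ℝ) 1) :=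
    IntegrableOn.congr_fun
      (integrableOn_const (C := (1:ℝ)) (by simp [Real.volume_Ioc] : volume (Ioc (0:ℝ) 1) ≠ ⊤))
      (fun u hu => by simp only [hh_def]; rw [if_pos hu.2]) measurableSet_Ioc
  have hIoi : IntegrableOn h (Ioi (1:ℝ)) :=
    IntegrableOn.congr_fun (integrableOn_Ioi_rpow_of_lt (by linarith : -p < -1) one_pos)
      (fun u hu => by simp only [hh_def]; rw [if_neg (not_le.mpr hu)]) measurableSet_Ioi
  have hunion : Ioc (0:ℝ) 1 ∪ Ioi 1 = Ioi 0 := Set.Ioc_union_Ioi_eq_Ioi zero_le_one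
  have hint_h : IntegrableOn h (Ioi (0:ℝ)) := by
    rw [← hunion]; exact hIoc.union hIoi
  -- pointwise bound on (volume {z | u ≤ f z}).toReal for u > 0
  have hbd : ∀ u ∈ Ioi (0:ℝ), (volume {z : Fin N → Ω | u ≤ f z}).toReal ≤ h u := by
    intro u hu
    by_cases hu1 : u ≤ 1
    · simp only [hh_def, if_pos hu1]
      exact (ENNReal.toReal_le_of_le_ofReal zero_le_one (by
        simpa using prob_le_one (μ := (volume : Measure (Fin N → Ω)))
          (s := {z | u ≤ f z})))
    · push_neg at hu1
      simp only [hh_def, if_neg (not_le.mpr hu1)]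
      set ε : ℝ := Real.sqrt (Real.log u / s) with hε_def
      have hlogu : 0 < Real.log u := Real.log_pos hu1
      have hεpos : 0 < ε := Real.sqrt_pos.mpr (by positivity)
      have hsub : {z : Fin N → Ω | u ≤ f z} ⊆ {z | ε ≤ Δ z} := by
        intro z hz
        simp only [Set.mem_setOf_eq] at *
        have h1 : Real.log u ≤ s * (max (Δ z) 0) ^ 2 := by
          calc Real.log u ≤ Real.log (f z) := Real.log_le_log (by linarith) hz
            _ = s * (max (Δ z) 0) ^ 2 := Real.log_exp _
        have h2 : Real.log u / s ≤ (max (Δ z) 0) ^ 2 := by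
          rw [div_le_iff₀ hs]; linarith [h1]
        have h3 : ε ≤ max (Δ z) 0 := by
          calc ε ≤ Real.sqrt ((max (Δ z) 0) ^ 2) := Real.sqrt_le_sqrt h2
            _ = max (Δ z) 0 := Real.sqrt_sq (le_max_right _ _)
        rcases le_or_gt (Δ z) 0 with hΔ0 | hΔ0
        · exfalso; rw [max_eq_right hΔ0] at h3; linarith
        · rwa [max_eq_left hΔ0.le] at h3
      have hch := chernoff hXm hX hN0 hεpos
      have hle : volume {z : Fin N → Ω | u ≤ f z}
          ≤ ENNReal.ofReal (Real.exp (-(2 * N * ε ^ 2))) :=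
        le_trans (measure_mono hsub) hch
      have hεsq : ε ^ 2 = Real.log u / s := Real.sq_sqrt (by positivity)
      have hexp_eq : Real.exp (-(2 * N * ε ^ 2)) = u ^ (-p) := by
        rw [hεsq, Real.rpow_def_of_pos (by linarith : (0:ℝ) < u)]
        congr 1
        rw [hs_def, hp_def]
        field_simp
      calc (volume {z : Fin N → Ω | u ≤ f z}).toReal
          ≤ (ENNReal.ofReal (Real.exp (-(2 * N * ε ^ 2)))).toReal :=
            ENNReal.toReal_mono ENNReal.ofReal_ne_top hle
        _ = Real.exp (-(2 * N * ε ^ 2)) := ENNReal.toReal_ofReal (Real.exp_pos _).le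
        _ = u ^ (-p) := hexp_eq
  -- integrate
  have hmain : ∫ u in Ioi (0:ℝ), (volume {z : Fin N → Ω | u ≤ f z}).toReal
      ≤ ∫ u in Ioi (0:ℝ), h u := by
    apply integral_mono_of_nonneg
    · exact Filter.Eventually.of_forall fun u => ENNReal.toReal_nonneg
    · exact hint_h
    · exact (ae_restrict_iff' measurableSet_Ioi).mpr (Filter.Eventually.of_forall hbd)
  have hcomp : ∫ u in Ioi (0:ℝ), h u = (N : ℝ) := by
    rw [← hunion, setIntegral_union (Set.Ioc_disjoint_Ioi le_rfl) measurableSet_Ioi hIoc hIoi]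
    have h1 : ∫ u in Ioc (0:ℝ) 1, h u = 1 := by
      rw [setIntegral_congr_fun measurableSet_Ioc
        (fun u hu => by simp only [hh_def, if_pos hu.2] : EqOn h (fun _ => 1) (Ioc 0 1))]
      simp [Real.volume_Ioc]
    have h2 : ∫ u in Ioi (1:ℝ), h u = (N:ℝ) - 1 := by
      rw [setIntegral_congr_fun measurableSet_Ioi
        (fun u hu => by simp only [hh_def, if_neg (not_le.mpr (Set.mem_Ioi.mp hu))] : EqOn h (fun u => u ^ (-p)) (Ioi 1))]
      rw [integral_Ioi_rpow_of_lt (by linarith : -p < -1) one_pos]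
      rw [Real.one_rpow]
      rw [hp_def]
      field_simp
      ring
    rw [h1, h2]
    ring
  calc ∫ u in Ioi (0:ℝ), (volume {z : Fin N → Ω | u ≤ f z}).toReal
      ≤ ∫ u in Ioi (0:ℝ), h u := hmain
    _ = (N : ℝ) := hcomp

end Sample2



/-- Nonnegativity of the KL divergence. -/
lemma kl_nonneg {α : Type*} [MeasurableSpace α] (μ ν : Measure α)
    [IsProbabilityMeasure μ] [IsProbabilityMeasure ν]
    (hμν : μ ≪ ν) (h_int : Integrable (llr μ ν) μ) :
    0 ≤ ∫ x, llr μ ν x ∂μ := by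
  have h_exp_int : Integrable (fun x => Real.exp (- llr μ ν x)) μ := by
    rw [integrable_congr (exp_neg_llr hμν)]
    exact Measure.integrable_toReal_rnDeriv
  have hjensen := ConvexOn.map_integral_le (μ := μ) (f := fun x => - llr μ ν x)
    convexOn_exp Real.continuous_exp.continuousOn isClosed_univ
    (Filter.Eventually.of_forall fun x => Set.mem_univ _) h_int.neg (by exact h_exp_int)
  have h1 : ∫ x, Real.exp (- llr μ ν x) ∂μ ≤ 1 := by
    rw [integral_congr_ae (exp_neg_llr hμν)]
    calc ∫ x, (ν.rnDeriv μ x).toReal ∂μ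
        = ∫ x in Set.univ, (ν.rnDeriv μ x).toReal ∂μ := by rw [setIntegral_univ]
      _ ≤ (ν Set.univ).toReal := Measure.setIntegral_toReal_rnDeriv_le (measure_ne_top ν _)
      _ = 1 := by simp
  have h2 : Real.exp (∫ x, - llr μ ν x ∂μ) ≤ 1 := le_trans hjensen h1
  have h3 : ∫ x, - llr μ ν x ∂μ ≤ 0 := by
    by_contra hcon
    push_neg at hcon
    exact absurd h2 (not_le.mpr (by calc 1 = Real.exp 0 := Real.exp_zero.symm
      _ < Real.exp (∫ x, - llr μ ν x ∂μ) := Real.exp_lt_exp.mpr hcon))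
  rw [integral_neg] at h3
  linarith

/-- Donsker–Varadhan / change-of-measure inequality for bounded measurable functions. -/
lemma dv_bound {α : Type*} [MeasurableSpace α] (Q P : Measure α)
    [IsProbabilityMeasure Q] [IsProbabilityMeasure P]
    (hQP : Q ≪ P) (hllr : Integrable (llr Q P) Q) {h : α → ℝ} (hmeas : Measurable h)
    {C : ℝ} (hb : ∀ x, |h x| ≤ C) :
    ∫ x, h x ∂Q ≤ ∫ x, llr Q P x ∂Q + Real.log (∫ x, Real.exp (h x) ∂P) := by
  have hfP : Integrable (fun x => Real.exp (h x)) P :=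
    integrable_of_bdd (C := Real.exp C) (hmeas.exp).aestronglyMeasurable
      (fun x => by
        rw [abs_of_pos (Real.exp_pos _)]
        exact Real.exp_le_exp.mpr (le_trans (le_abs_self _) (hb x)))
  have hfQ : Integrable h Q := integrable_of_bdd hmeas.aestronglyMeasurable hb
  haveI : IsProbabilityMeasure (P.tilted h) := isProbabilityMeasure_tilted hfP
  have hQt : Q ≪ P.tilted h := hQP.trans (absolutelyContinuous_tilted hfP)
  have h_int_t : Integrable (llr Q (P.tilted h)) Q :=
    integrable_llr_tilted_right hQP hfQ hllr hfP
  have hkey : ∫ x, llr Q (P.tilted h) x ∂Q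
      = ∫ x, llr Q P x ∂Q - ∫ x, h x ∂Q + Real.log (∫ x, Real.exp (h x) ∂P) :=
    integral_llr_tilted_right hQP hfQ hfP hllr
  have hnn : 0 ≤ ∫ x, llr Q (P.tilted h) x ∂Q := kl_nonneg Q (P.tilted h) hQt h_int_t
  linarith [hkey ▸ hnn]

/-- Jensen's inequality for the square function. -/
lemma sq_integral_le {α : Type*} [MeasurableSpace α] (μ : Measure α) [IsProbabilityMeasure μ]
    {f : α → ℝ} (hf : Integrable f μ) (hf2 : Integrable (fun x => f x ^ 2) μ) :
    (∫ x, f x ∂μ) ^ 2 ≤ ∫ x, f x ^ 2 ∂μ := by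
  set c := ∫ x, f x ∂μ with hc_def
  have h0 : 0 ≤ ∫ x, (f x - c) ^ 2 ∂μ := integral_nonneg fun x => sq_nonneg _
  have hexpand : ∫ x, (f x - c) ^ 2 ∂μ = (∫ x, f x ^ 2 ∂μ) - 2 * c * c + c ^ 2 := by
    have : (fun x => (f x - c) ^ 2) = fun x => f x ^ 2 - 2 * c * f x + c ^ 2 := by
      funext x; ring
    have hsub : Integrable (fun x => f x ^ 2 - 2 * c * f x) μ := hf2.sub (hf.const_mul (2 * c))
    rw [this, integral_add hsub (integrable_const _),
      integral_sub hf2 (hf.const_mul (2 * c)), integral_const_mul, integral_const]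
    simp [hc_def]
  nlinarith [h0, hexpand]

end Aux

/-- **PAC-Bayes bound (McAllester).**  Let `ℓ : Θ × Z → [0,1]` be a jointly measurable
loss, `D` a probability measure on `Z`, `P` a prior probability measure on `Θ`, `N ≥ 2`,
and `δ ∈ (0,1)`.  Then with `D^N`-probability at least `1 - δ` over the i.i.d. sample
`z = (z₁, …, z_N)`, simultaneously for every posterior probability measure `Q` on `Θ`,
either `KL(Q ‖ P) = +∞` (in which case the bound is vacuous) or
`E_{θ∼Q} E_{z∼D} ℓ(θ, z) ≤ E_{θ∼Q} (1/N) ∑ᵢ ℓ(θ, zᵢ) + √((KL(Q‖P) + ln(N/δ)) / (2(N-1)))`. -/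
theorem pac_bayes_mcallester
    {Θ Z : Type*} [MeasurableSpace Θ] [MeasurableSpace Z]
    (ℓ : Θ → Z → ℝ) (hℓ_meas : Measurable (Function.uncurry ℓ))
    (hℓ_bounds : ∀ θ z, ℓ θ z ∈ Set.Icc (0 : ℝ) 1)
    (D : Measure Z) [IsProbabilityMeasure D]
    (P : Measure Θ) [IsProbabilityMeasure P]
    (N : ℕ) (hN : 2 ≤ N) (δ : ℝ) (hδ : δ ∈ Set.Ioo (0 : ℝ) 1) :
    ENNReal.ofReal (1 - δ) ≤
      (Measure.pi fun _ : Fin N => D)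
        {z : Fin N → Z | ∀ Q : Measure Θ, IsProbabilityMeasure Q →
          klDivergence Q P = ⊤ ∨
          ∫ θ, ∫ x, ℓ θ x ∂D ∂Q
            ≤ ∫ θ, ((1 / N : ℝ) * ∑ i, ℓ θ (z i)) ∂Q
              + Real.sqrt (((klDivergence Q P).toReal + Real.log (N / δ))
                  / (2 * ((N : ℝ) - 1)))} := by
  letI : MeasureSpace Z := ⟨D⟩
  haveI hDvol : IsProbabilityMeasure (volume : Measure Z) :=
    inferInstanceAs (IsProbabilityMeasure D)
  haveI := pi_prob (Ω := Z) N
  have hN0 : 0 < N := by omega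
  have hNR : (1:ℝ) < (N:ℝ) := by exact_mod_cast hN.trans_lt' one_lt_two
  have hNpos : (0:ℝ) < N := by linarith
  have hδ0 := hδ.1
  have hδ1 := hδ.2
  set s : ℝ := 2 * ((N:ℝ) - 1) with hs_def
  have hs : 0 < s := by simp only [hs_def]; linarith
  set R : Θ → ℝ := fun θ => ∫ x, ℓ θ x ∂D with hR_def
  set Remp : Θ → (Fin N → Z) → ℝ := fun θ z => (N:ℝ)⁻¹ * ∑ i, ℓ θ (z i) with hRemp_def
  set Δp : Θ → (Fin N → Z) → ℝ := fun θ z => max (R θ - Remp θ z) 0 with hΔp_def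
  set g : Θ → (Fin N → Z) → ℝ := fun θ z => s * (Δp θ z) ^ 2 with hg_def
  have hℓθ_meas : ∀ θ, Measurable (ℓ θ) := fun θ =>
    hℓ_meas.comp (measurable_const.prodMk measurable_id)
  have hR_meas : Measurable R := by
    have : StronglyMeasurable fun θ => ∫ x, (Function.uncurry ℓ) (θ, x) ∂D :=
      hℓ_meas.stronglyMeasurable.integral_prod_right'
    exact this.measurable
  have hR01 : ∀ θ, R θ ∈ Set.Icc (0:ℝ) 1 := by
    intro θ
    have hXint : Integrable (ℓ θ) D := integrable_of_bdd (C := 1)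
      (hℓθ_meas θ).aestronglyMeasurable
      (fun x => by rw [abs_le]; constructor <;> linarith [(hℓ_bounds θ x).1, (hℓ_bounds θ x).2])
    constructor
    · exact integral_nonneg fun x => (hℓ_bounds θ x).1
    · calc R θ ≤ ∫ _, (1:ℝ) ∂D :=
          integral_mono hXint (integrable_const 1) fun x => (hℓ_bounds θ x).2
        _ = 1 := by simp
  have hRemp01 : ∀ θ z, Remp θ z ∈ Set.Icc (0:ℝ) 1 := fun θ z =>
    avg_mem (hℓ_bounds θ) hN0 z
  have hΔp01 : ∀ θ z, Δp θ z ∈ Set.Icc (0:ℝ) 1 := by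
    intro θ z
    refine ⟨le_max_right _ _, max_le (by linarith [(hR01 θ).2, (hRemp01 θ z).1]) zero_le_one⟩
  have hg_nonneg : ∀ θ z, 0 ≤ g θ z := by
    intro θ z
    simp only [hg_def]
    positivity
  have hg_bd : ∀ θ z, |g θ z| ≤ s := by
    intro θ z
    rw [abs_of_nonneg (hg_nonneg θ z)]
    calc s * (Δp θ z) ^ 2 ≤ s * 1 :=
        mul_le_mul_of_nonneg_left (by nlinarith [(hΔp01 θ z).1, (hΔp01 θ z).2]) hs.le
      _ = s := mul_one s
  have hexpg_bd : ∀ θ z, |Real.exp (g θ z)| ≤ Real.exp s := by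
    intro θ z
    rw [abs_of_pos (Real.exp_pos _)]
    exact Real.exp_le_exp.mpr (le_trans (le_abs_self _) (hg_bd θ z))
  -- joint measurability
  have hsum_meas : Measurable fun p : Θ × (Fin N → Z) => ∑ i, ℓ p.1 (p.2 i) :=
    Finset.measurable_sum _ fun i _ =>
      hℓ_meas.comp (measurable_fst.prodMk ((measurable_pi_apply i).comp measurable_snd))
  have hG_meas : Measurable fun p : Θ × (Fin N → Z) => Real.exp (g p.1 p.2) :=
    (((((hR_meas.comp measurable_fst).sub (hsum_meas.const_mul _)).max
      measurable_const).pow_const 2).const_mul s).exp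
  have hgθ_meas : ∀ z, Measurable fun θ => g θ z := by
    intro z
    have h1 : Measurable fun θ => ∑ i, ℓ θ (z i) :=
      Finset.measurable_sum _ fun i _ =>
        hℓ_meas.comp (measurable_id.prodMk measurable_const)
    exact ((((hR_meas.sub (h1.const_mul _)).max measurable_const).pow_const 2).const_mul s)
  -- the averaged exponential moment
  set F : (Fin N → Z) → ℝ := fun z => ∫ θ, Real.exp (g θ z) ∂P with hF_def
  have hF_meas : Measurable F := by
    have h0 : StronglyMeasurable (Function.uncurry fun θ z => Real.exp (g θ z)) :=
      hG_meas.stronglyMeasurable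
    exact h0.integral_prod_left.measurable
  have hexpgθ_int : ∀ z, Integrable (fun θ => Real.exp (g θ z)) P := by
    intro z
    exact integrable_of_bdd (C := Real.exp s) ((hgθ_meas z).exp).aestronglyMeasurable
      (fun θ => hexpg_bd θ z)
  have hF_one : ∀ z, 1 ≤ F z := by
    intro z
    calc (1:ℝ) = ∫ _, (1:ℝ) ∂P := by simp
      _ ≤ ∫ θ, Real.exp (g θ z) ∂P := by
          apply integral_mono (integrable_const 1) (hexpgθ_int z)
          intro θ
          calc (1:ℝ) = Real.exp 0 := Real.exp_zero.symm
            _ ≤ Real.exp (g θ z) := Real.exp_le_exp.mpr (hg_nonneg θ z)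
  have hF_bd : ∀ z, |F z| ≤ Real.exp s := by
    intro z
    rw [abs_of_pos (lt_of_lt_of_le one_pos (hF_one z))]
    calc F z ≤ ∫ _, Real.exp s ∂P :=
        integral_mono (hexpgθ_int z) (integrable_const _)
          (fun θ => le_trans (le_abs_self _) (hexpg_bd θ z))
      _ = Real.exp s := by simp
  have hF_int : Integrable F volume :=
    integrable_of_bdd (C := Real.exp s) hF_meas.aestronglyMeasurable hF_bd
  -- Fubini and the moment bound: E[F] ≤ N
  have hEF : ∫ z, F z ≤ (N:ℝ) := by
    have hprod_int : Integrable (Function.uncurry fun θ z => Real.exp (g θ z))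
        (P.prod (volume : Measure (Fin N → Z))) :=
      integrable_of_bdd (C := Real.exp s) hG_meas.aestronglyMeasurable
        (fun p => hexpg_bd p.1 p.2)
    have hswap : ∫ θ, ∫ z, Real.exp (g θ z) ∂volume ∂P = ∫ z, F z :=
      integral_integral_swap hprod_int
    have hmom : ∀ θ, ∫ z : Fin N → Z, Real.exp (g θ z) ∂volume ≤ (N:ℝ) := by
      intro θ
      have := moment_bound (Ω := Z) (hℓθ_meas θ) (hℓ_bounds θ) hN
      exact this
    rw [← hswap]
    have hstep : ∫ θ, ∫ z, Real.exp (g θ z) ∂volume ∂P ≤ ∫ _θ : Θ, (N:ℝ) ∂P :=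
      integral_mono_of_nonneg
        (Filter.Eventually.of_forall fun θ =>
          integral_nonneg fun z => (Real.exp_pos _).le)
        (integrable_const _) (Filter.Eventually.of_forall hmom)
    simpa using hstep
  -- Markov's inequality
  set bad : Set (Fin N → Z) := {z | (N:ℝ)/δ ≤ F z} with hbad_def
  have hbad_le : (volume : Measure (Fin N → Z)) bad ≤ ENNReal.ofReal δ := by
    have hM := mul_meas_ge_le_integral_of_nonneg
      (Filter.Eventually.of_forall fun z => le_trans zero_le_one (hF_one z))
      hF_int ((N:ℝ)/δ)
    have hMN : (N:ℝ)/δ * ((volume : Measure (Fin N → Z)) bad).toReal ≤ (N:ℝ) :=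
      le_trans hM hEF
    have htr : ((volume : Measure (Fin N → Z)) bad).toReal ≤ δ := by
      have ha : 0 < (N:ℝ)/δ := by positivity
      have hNd : (N:ℝ)/δ * δ = (N:ℝ) := div_mul_cancel₀ _ (ne_of_gt hδ0)
      by_contra hcon
      push_neg at hcon
      have := mul_lt_mul_of_pos_left hcon ha
      rw [hNd] at this
      linarith
    rw [ENNReal.le_ofReal_iff_toReal_le (measure_ne_top _ _) hδ0.le]
    exact htr
  -- the good event is contained in the PAC-Bayes event
  have hsubset : badᶜ ⊆
      {z : Fin N → Z | ∀ Q : Measure Θ, IsProbabilityMeasure Q →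
        klDivergence Q P = ⊤ ∨
        ∫ θ, R θ ∂Q ≤ ∫ θ, Remp θ z ∂Q
          + Real.sqrt (((klDivergence Q P).toReal + Real.log (N / δ)) / s)} := by
    intro z hz Q hQ
    haveI := hQ
    rw [Set.mem_compl_iff, hbad_def, Set.mem_setOf_eq, not_le] at hz
    by_cases hc : Q ≪ P ∧ Integrable (llr Q P) Q
    · right
      set KL : ℝ := ∫ θ, llr Q P θ ∂Q with hKL_def
      have hKLd : klDivergence Q P = ((KL : ℝ) : EReal) := if_pos hc
      have hKLt : (klDivergence Q P).toReal = KL := by rw [hKLd]; exact EReal.toReal_coe _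
      -- change of measure
      have hdv := dv_bound Q P hc.1 hc.2 (hgθ_meas z) (hg_bd · z)
      have hFz_pos : 0 < F z := lt_of_lt_of_le one_pos (hF_one z)
      have hlog_le : Real.log (F z) ≤ Real.log ((N:ℝ)/δ) :=
        Real.log_le_log hFz_pos hz.le
      have h1 : ∫ θ, g θ z ∂Q ≤ KL + Real.log ((N:ℝ)/δ) := by
        calc ∫ θ, g θ z ∂Q ≤ KL + Real.log (F z) := hdv
          _ ≤ KL + Real.log ((N:ℝ)/δ) := by linarith
      -- Jensen
      have hΔpz_meas : Measurable fun θ => Δp θ z := by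
        have h1' : Measurable fun θ => ∑ i, ℓ θ (z i) :=
          Finset.measurable_sum _ fun i _ =>
            hℓ_meas.comp (measurable_id.prodMk measurable_const)
        exact (hR_meas.sub (h1'.const_mul _)).max measurable_const
      have hΔpz_int : Integrable (fun θ => Δp θ z) Q :=
        integrable_of_bdd (C := 1) hΔpz_meas.aestronglyMeasurable
          (fun θ => by rw [abs_of_nonneg (hΔp01 θ z).1]; exact (hΔp01 θ z).2)
      have hΔpz2_int : Integrable (fun θ => (Δp θ z) ^ 2) Q :=
        integrable_of_bdd (C := 1) (hΔpz_meas.pow_const 2).aestronglyMeasurable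
          (fun θ => by
            rw [abs_of_nonneg (sq_nonneg _)]
            nlinarith [(hΔp01 θ z).1, (hΔp01 θ z).2])
      have hgz_int_eq : ∫ θ, g θ z ∂Q = s * ∫ θ, (Δp θ z) ^ 2 ∂Q := by
        simp only [hg_def]
        exact integral_const_mul s _
      have h2 : ∫ θ, (Δp θ z) ^ 2 ∂Q ≤ (KL + Real.log ((N:ℝ)/δ)) / s := by
        rw [le_div_iff₀ hs, mul_comm]
        rw [hgz_int_eq] at h1
        linarith
      have h3 : (∫ θ, Δp θ z ∂Q) ^ 2 ≤ (KL + Real.log ((N:ℝ)/δ)) / s :=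
        le_trans (sq_integral_le Q hΔpz_int hΔpz2_int) h2
      have h4 : ∫ θ, Δp θ z ∂Q
          ≤ Real.sqrt ((KL + Real.log ((N:ℝ)/δ)) / s) := by
        rw [Real.le_sqrt (integral_nonneg fun θ => (hΔp01 θ z).1)
          (le_trans (sq_nonneg _) h3)]
        exact h3
      -- conclude
      have hR_int : Integrable R Q := integrable_of_bdd (C := 1)
        hR_meas.aestronglyMeasurable
        (fun θ => by rw [abs_of_nonneg (hR01 θ).1]; exact (hR01 θ).2)
      have hRemp_int : Integrable (fun θ => Remp θ z) Q := by
        have h1' : Measurable fun θ => Remp θ z := by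
          apply Measurable.const_mul
          exact Finset.measurable_sum _ fun i _ =>
            hℓ_meas.comp (measurable_id.prodMk measurable_const)
        exact integrable_of_bdd (C := 1) h1'.aestronglyMeasurable
          (fun θ => by rw [abs_of_nonneg (hRemp01 θ z).1]; exact (hRemp01 θ z).2)
      have h5 : ∫ θ, R θ ∂Q - ∫ θ, Remp θ z ∂Q ≤ ∫ θ, Δp θ z ∂Q := by
        rw [← integral_sub hR_int hRemp_int]
        exact integral_mono (hR_int.sub hRemp_int) hΔpz_int
          (fun θ => le_max_left _ _)
      rw [hKLt]
      linarith
    · exact Or.inl (if_neg hc)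
  -- putting everything together
  have hμvol : (Measure.pi fun _ : Fin N => D) = (volume : Measure (Fin N → Z)) :=
    (MeasureTheory.volume_pi).symm
  rw [hμvol]
  have hset_eq : {z : Fin N → Z | ∀ Q : Measure Θ, IsProbabilityMeasure Q →
        klDivergence Q P = ⊤ ∨
        ∫ θ, ∫ x, ℓ θ x ∂D ∂Q
          ≤ ∫ θ, ((1 / N : ℝ) * ∑ i, ℓ θ (z i)) ∂Q
            + Real.sqrt (((klDivergence Q P).toReal + Real.log (N / δ))
                / (2 * ((N : ℝ) - 1)))}
      = {z : Fin N → Z | ∀ Q : Measure Θ, IsProbabilityMeasure Q →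
        klDivergence Q P = ⊤ ∨
        ∫ θ, R θ ∂Q ≤ ∫ θ, Remp θ z ∂Q
          + Real.sqrt (((klDivergence Q P).toReal + Real.log (N / δ)) / s)} := by
    simp only [hR_def, hRemp_def, hs_def, one_div]
  rw [hset_eq]
  calc ENNReal.ofReal (1 - δ)
      = ENNReal.ofReal 1 - ENNReal.ofReal δ := ENNReal.ofReal_sub 1 hδ0.le
    _ = 1 - ENNReal.ofReal δ := by rw [ENNReal.ofReal_one]
    _ ≤ 1 - (volume : Measure (Fin N → Z)) bad :=
        tsub_le_tsub_left hbad_le 1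
    _ ≤ (volume : Measure (Fin N → Z)) badᶜ := by
        rw [tsub_le_iff_right]
        calc (1 : ENNReal) = (volume : Measure (Fin N → Z)) Set.univ := by simp
          _ = (volume : Measure (Fin N → Z)) (badᶜ ∪ bad) := by
              rw [Set.compl_union_self]
          _ ≤ (volume : Measure (Fin N → Z)) badᶜ
              + (volume : Measure (Fin N → Z)) bad := measure_union_le _ _
    _ ≤ _ := measure_mono hsubset
end
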